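/- Let G be a finitely generated one-ended group with finite generating set S and Cayley graph X = Γ(G,S), and let r > 0. Let B_r denote the union of the bounded connected components of X∖B(r) and suppose B_r ≠ ∅. Then V_0^X(r) = max{d_S(e,x) : x ∈ B_r}; moreover there exist a bounded connected component A_r of X∖B(r) and an element a ∈ A_r with V_0^X(r) = d_S(e,a). -/

import Mathlib

/-- The Cayley graph of a group `G` with respect to a generating set `S`. -/
def cayleyGraph {G : Type*} [Group G] (S : Set G) : SimpleGraph G where
  Adj x y := x ≠ y ∧ (x⁻¹ * y ∈ S ∨ y⁻¹ * x ∈ S)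
  symm := ⟨fun x y h => ⟨h.1.symm, h.2.symm⟩⟩
  loopless := ⟨fun x h => h.1 rfl⟩

/-- The ball of radius `r` centered at the identity in the Cayley graph. -/
def cayleyBall {G : Type*} [Group G] (S : Set G) (r : ℕ) : Set G :=
  {x : G | (cayleyGraph S).dist 1 x ≤ r}

/-- `x` and `y` can be joined by a path in the Cayley graph avoiding the ball `B(r)`. -/
def JoinedOutside {G : Type*} [Group G] (S : Set G) (r : ℕ) (x y : G) : Prop :=
  ∃ p : (cayleyGraph S).Walk x y, ∀ v ∈ p.support, v ∉ cayleyBall S r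

/-- The end depth function `V₀(r)`: the least `k` such that any two points outside `B(k)`
can be joined by a path avoiding `B(r)`. -/
noncomputable def endDepth {G : Type*} [Group G] (S : Set G) (r : ℕ) : ℕ :=
  sInf {k : ℕ | ∀ x y : G, x ∉ cayleyBall S k → y ∉ cayleyBall S k → JoinedOutside S r x y}

/-- The union `B_r` of the bounded (i.e. finite) connected components of the complement
of the ball `B(r)` in the Cayley graph. -/
def boundedPart {G : Type*} [Group G] (S : Set G) (r : ℕ) : Set G :=
  {x : G | ∃ h : x ∈ (cayleyBall S r)ᶜ,
    ((((cayleyGraph S).induce (cayleyBall S r)ᶜ).connectedComponentMk ⟨x, h⟩).supp).Finite}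

/-- `A` is (the vertex set of) a connected component of the subgraph of `H`
induced on the set `W`. -/
def IsCompOf {G : Type*} (H : SimpleGraph G) (W : Set G) (A : Set G) : Prop :=
  ∃ C : (H.induce W).ConnectedComponent, A = Subtype.val '' C.supp

/-- The number of ends of the Cayley graph of `G` w.r.t. `S`. -/
noncomputable def numEnds {G : Type*} [Group G] (S : Set G) : ℕ∞ :=
  ⨆ (K : Set G) (_ : K.Finite),
    ENat.card {C : (cayleyGraph S).ComponentCompl K // C.supp.Infinite}


section aux
variable {G : Type*} [Group G] {S : Set G}

lemma cayley_adj_mul (g : G) {x y : G} :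
    (cayleyGraph S).Adj (g * x) (g * y) ↔ (cayleyGraph S).Adj x y := by
  simp only [cayleyGraph, mul_inv_rev]
  constructor
  · rintro ⟨hne, h⟩
    refine ⟨fun e => hne (by rw [e]), ?_⟩
    rcases h with h | h
    · exact Or.inl (by rwa [mul_assoc, inv_mul_cancel_left] at h)
    · exact Or.inr (by rwa [mul_assoc, inv_mul_cancel_left] at h)
  · rintro ⟨hne, h⟩
    refine ⟨fun e => hne (mul_left_cancel e), ?_⟩
    rcases h with h | h
    · exact Or.inl (by rwa [mul_assoc, inv_mul_cancel_left])
    · exact Or.inr (by rwa [mul_assoc, inv_mul_cancel_left])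

/-- Left multiplication as a graph isomorphism of the Cayley graph. -/
def cayleyMulIso (S : Set G) (g : G) : cayleyGraph S ≃g cayleyGraph S :=
  { Equiv.mulLeft g with map_rel_iff' := fun {x y} => cayley_adj_mul g }

lemma cayley_reachable_mul (g : G) {x y : G} (h : (cayleyGraph S).Reachable x y) :
    (cayleyGraph S).Reachable (g * x) (g * y) :=
  h.map (cayleyMulIso S g).toHom

lemma cayley_connected (hgen : Subgroup.closure S = ⊤) : (cayleyGraph S).Connected := by
  have key : ∀ x : G, (cayleyGraph S).Reachable 1 x := by
    intro x
    have hx : x ∈ Subgroup.closure S := hgen ▸ Subgroup.mem_top x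
    induction hx using Subgroup.closure_induction with
    | mem s hs =>
      rcases eq_or_ne 1 s with rfl | hne
      · exact SimpleGraph.Reachable.refl _
      · exact SimpleGraph.Adj.reachable ⟨hne, Or.inl (by simpa using hs)⟩
    | one => exact SimpleGraph.Reachable.refl _
    | mul a b ha hb iha ihb =>
      refine iha.trans ?_
      simpa using cayley_reachable_mul a ihb
    | inv a ha iha =>
      have := cayley_reachable_mul a⁻¹ iha
      simp only [mul_one, inv_mul_cancel] at this
      exact this.symm
  haveI : Nonempty G := ⟨1⟩
  exact SimpleGraph.Connected.mk (fun x y => (key x).symm.trans (key y))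

lemma cayley_neighborSet_finite (hS : S.Finite) (v : G) :
    ((cayleyGraph S).neighborSet v).Finite := by
  apply Set.Finite.subset (((hS.image (fun s => v * s)).union (hS.image (fun s => v * s⁻¹))))
  rintro w ⟨-, h | h⟩
  · exact Or.inl ⟨v⁻¹ * w, h, by simp⟩
  · exact Or.inr ⟨w⁻¹ * v, h, by group⟩

lemma cayleyBall_finite (hS : S.Finite) (hgen : Subgroup.closure S = ⊤) (n : ℕ) :
    (cayleyBall S n).Finite := by
  have hconn := cayley_connected hgen
  induction n with
  | zero =>
    apply Set.Finite.subset (Set.finite_singleton 1)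
    intro x hx
    have : (cayleyGraph S).dist 1 x = 0 := Nat.le_zero.mp hx
    exact (hconn.dist_eq_zero_iff.mp this).symm
  | succ n ih =>
    apply Set.Finite.subset (ih.union (ih.biUnion (fun y _ => cayley_neighborSet_finite hS y)))
    intro x hx
    by_cases hxn : x ∈ cayleyBall S n
    · exact Or.inl hxn
    · have hne : x ≠ 1 := by
        rintro rfl
        exact hxn (by simp [cayleyBall, SimpleGraph.dist_self])
      obtain ⟨p, hp⟩ := (hconn x 1).exists_walk_length_eq_dist
      obtain ⟨y, hadj, q, rfl⟩ := SimpleGraph.Walk.exists_eq_cons_of_ne hne p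
      have hq : q.length ≤ n := by
        have h1 : (cayleyGraph S).dist x 1 ≤ n + 1 := by
          rw [SimpleGraph.dist_comm]; exact hx
      -- length (cons hadj q) = q.length + 1 = dist x 1 ≤ n+1
        have h2 : q.length + 1 = (cayleyGraph S).dist x 1 := by simpa using hp
        omega
      have hy : y ∈ cayleyBall S n := by
        have : (cayleyGraph S).dist y 1 ≤ q.length := SimpleGraph.dist_le q
        rw [SimpleGraph.dist_comm] at this
        exact le_trans this hq
      exact Or.inr (Set.mem_biUnion hy hadj.symm)

end aux

section aux2
variable {V : Type*} {H : SimpleGraph V}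

lemma reachable_induce_of_walk {s : Set V} :
    ∀ {x y : V} (p : H.Walk x y) (_ : ∀ v ∈ p.support, v ∈ s) (hx : x ∈ s) (hy : y ∈ s),
      (H.induce s).Reachable ⟨x, hx⟩ ⟨y, hy⟩ := by
  intro x y p
  induction p with
  | nil => intro _ hx hy; exact SimpleGraph.Reachable.refl _
  | @cons a b c h q ih =>
    intro hp hx hy
    have hb : b ∈ s := hp b (by simp)
    refine SimpleGraph.Reachable.trans (SimpleGraph.Adj.reachable ?_) (ih ?_ hb hy)
    · exact h
    · intro v hv; exact hp v (by simp [hv])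

lemma compSupp_eq {K : Set V} (C : (H.induce Kᶜ).ConnectedComponent) :
    SimpleGraph.ComponentCompl.supp (G := H) (K := K) C = Subtype.val '' C.supp := by
  ext v
  constructor
  · rintro ⟨h, e⟩
    exact ⟨⟨v, h⟩, e, rfl⟩
  · rintro ⟨⟨w, hw⟩, e, rfl⟩
    exact ⟨hw, e⟩

end aux2

section aux3
variable {G : Type*} [Group G] {S : Set G} {r : ℕ}

/-- boundedPart rephrased via `ComponentCompl`. -/
lemma mem_boundedPart_iff {x : G} :
    x ∈ boundedPart S r ↔
      ∃ h : x ∉ cayleyBall S r, ((cayleyGraph S).componentComplMk h).supp.Finite := by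
  unfold boundedPart
  constructor
  · rintro ⟨h, hfin⟩
    refine ⟨h, ?_⟩
    rw [SimpleGraph.componentComplMk, compSupp_eq]
    exact hfin.image _
  · rintro ⟨h, hfin⟩
    refine ⟨h, ?_⟩
    rw [SimpleGraph.componentComplMk, compSupp_eq] at hfin
    exact (Set.finite_image_iff (Set.injOn_of_injective Subtype.val_injective)).mp hfin

lemma joinedOutside_of_comp_eq {x y : G} (hx : x ∉ cayleyBall S r) (hy : y ∉ cayleyBall S r)
    (h : (cayleyGraph S).componentComplMk hx = (cayleyGraph S).componentComplMk hy) :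
    JoinedOutside S r x y := by
  obtain ⟨q⟩ := SimpleGraph.ConnectedComponent.exact h
  refine ⟨q.map (SimpleGraph.Embedding.induce (cayleyBall S r)ᶜ).toHom, ?_⟩
  intro v hv
  change v ∈ (q.map (SimpleGraph.Embedding.induce (cayleyBall S r)ᶜ).toHom).support at hv
  rw [SimpleGraph.Walk.support_map, List.mem_map] at hv
  obtain ⟨⟨w, hw⟩, -, rfl⟩ := hv
  exact hw

lemma comp_eq_of_joinedOutside {x y : G} (hx : x ∉ cayleyBall S r) (hy : y ∉ cayleyBall S r)
    (h : JoinedOutside S r x y) :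
    (cayleyGraph S).componentComplMk hx = (cayleyGraph S).componentComplMk hy := by
  obtain ⟨p, hp⟩ := h
  exact SimpleGraph.ConnectedComponent.sound (reachable_induce_of_walk p hp hx hy)

end aux3

section aux4
variable {G : Type*} [Group G] {S : Set G}

lemma not_mem_ball_iff {x : G} {n : ℕ} :
    x ∉ cayleyBall S n ↔ n < (cayleyGraph S).dist 1 x := by
  simp [cayleyBall]

end aux4


/-- For a finitely generated one ended group, if the union `B_r` of the bounded components of
`X ∖ B(r)` is nonempty, then `V₀(r) = max {d(e,x) | x ∈ B_r}`; moreover this maximum is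
attained on some bounded connected component `A_r` of `X ∖ B(r)`. -/
theorem endDepth_eq_max_boundedPart {G : Type*} [Group G] (S : Set G) (hS : S.Finite)
    (hgen : Subgroup.closure S = ⊤) (hone : numEnds S = 1) (r : ℕ) (hr : 0 < r)
    (hne : (boundedPart S r).Nonempty) :
    endDepth S r = sSup ((fun x => (cayleyGraph S).dist 1 x) '' boundedPart S r) ∧
    ∃ A : Set G, IsCompOf (cayleyGraph S) (cayleyBall S r)ᶜ A ∧ A.Finite ∧
      ∃ a ∈ A, endDepth S r = (cayleyGraph S).dist 1 a := by
  have hconn := cayley_connected hgen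
  have hballfin := cayleyBall_finite hS hgen
  haveI : (cayleyGraph S).LocallyFinite := fun v => (cayley_neighborSet_finite hS v).fintype
  haveI : Fact (cayleyGraph S).Preconnected := ⟨hconn.preconnected⟩
  have hfinC : Finite ((cayleyGraph S).ComponentCompl (cayleyBall S r)) := by
    rw [← (hballfin r).coe_toFinset]
    exact SimpleGraph.componentCompl_finite (hballfin r).toFinset
  -- G is infinite
  have hGinf : Infinite G := by
    by_contra hfin
    rw [not_infinite_iff_finite] at hfin
    have h0 : numEnds S = 0 := by
      refine le_antisymm ?_ zero_le
      refine iSup₂_le fun K hK => ?_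
      have hemp : IsEmpty {C : (cayleyGraph S).ComponentCompl K // C.supp.Infinite} :=
        ⟨fun ⟨C, hC⟩ => hC (Set.toFinite _)⟩
      exact le_of_eq ((ENat.card_eq_zero_iff_empty _).mpr hemp)
    rw [h0] at hone
    exact absurd hone (by decide)
  -- at most one infinite component
  have hle : ENat.card
      {C : (cayleyGraph S).ComponentCompl (cayleyBall S r) // C.supp.Infinite} ≤ 1 := by
    rw [← hone]
    exact le_iSup_of_le (cayleyBall S r) (le_iSup_of_le (hballfin r) le_rfl)
  have hsub := (ENat.card_le_one_iff_subsingleton _).mp hle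
  -- boundedPart is finite
  have hbfin : (boundedPart S r).Finite := by
    refine Set.Finite.subset
      (Set.Finite.biUnion (Set.toFinite {C : (cayleyGraph S).ComponentCompl (cayleyBall S r) |
        C.supp.Finite}) (fun C hC => hC)) ?_
    intro x hx
    obtain ⟨hxK, hfin⟩ := mem_boundedPart_iff.mp hx
    exact Set.mem_biUnion hfin ((cayleyGraph S).componentComplMk_mem hxK)
  -- the maximum and its witness
  have hMmem := (hne.image (fun x => (cayleyGraph S).dist 1 x)).csSup_mem
    (hbfin.image (fun x => (cayleyGraph S).dist 1 x))
  set M := sSup ((fun x => (cayleyGraph S).dist 1 x) '' boundedPart S r) with hM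
  obtain ⟨a, haB, haM⟩ := hMmem
  have hub : ∀ x ∈ boundedPart S r, (cayleyGraph S).dist 1 x ≤ M := fun x hx =>
    le_csSup (hbfin.image (fun x => (cayleyGraph S).dist 1 x)).bddAbove ⟨x, hx, rfl⟩
  obtain ⟨haK, hafin⟩ := mem_boundedPart_iff.mp haB
  have hda : (cayleyGraph S).dist 1 a = M := haM
  have hrM : r < M := hda ▸ not_mem_ball_iff.mp haK
  set T := {k : ℕ | ∀ x y : G, x ∉ cayleyBall S k → y ∉ cayleyBall S k → JoinedOutside S r x y}
    with hT
  -- M ∈ T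
  have hMT : M ∈ T := by
    intro x y hx hy
    rw [not_mem_ball_iff] at hx hy
    have hxK : x ∉ cayleyBall S r := not_mem_ball_iff.mpr (lt_trans hrM hx)
    have hyK : y ∉ cayleyBall S r := not_mem_ball_iff.mpr (lt_trans hrM hy)
    have hxinf : ((cayleyGraph S).componentComplMk hxK).supp.Infinite := by
      by_contra hf
      rw [Set.not_infinite] at hf
      exact absurd (hub x (mem_boundedPart_iff.mpr ⟨hxK, hf⟩)) (not_le.mpr hx)
    have hyinf : ((cayleyGraph S).componentComplMk hyK).supp.Infinite := by
      by_contra hf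
      rw [Set.not_infinite] at hf
      exact absurd (hub y (mem_boundedPart_iff.mpr ⟨hyK, hf⟩)) (not_le.mpr hy)
    have := hsub.elim ⟨_, hxinf⟩ ⟨_, hyinf⟩
    exact joinedOutside_of_comp_eq hxK hyK (Subtype.ext_iff.mp this)
  -- any element of T is ≥ M
  have hlb : ∀ k ∈ T, M ≤ k := by
    intro k hk
    by_contra hkM
    push_neg at hkM
    obtain ⟨y, hy⟩ := (hballfin (max k M)).infinite_compl.nonempty
    rw [Set.mem_compl_iff, not_mem_ball_iff] at hy
    have hak : a ∉ cayleyBall S k := not_mem_ball_iff.mpr (by omega)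
    have hyk : y ∉ cayleyBall S k := not_mem_ball_iff.mpr (by
      have := le_max_left k M; omega)
    have hyK : y ∉ cayleyBall S r := not_mem_ball_iff.mpr (by
      have h1 := le_max_right k M; omega)
    have hcomp := comp_eq_of_joinedOutside haK hyK (hk a y hak hyk)
    have hyB : y ∈ boundedPart S r := mem_boundedPart_iff.mpr ⟨hyK, hcomp ▸ hafin⟩
    have := hub y hyB
    have h2 := le_max_right k M
    omega
  have hED : endDepth S r = M := le_antisymm (Nat.sInf_le hMT) (hlb _ (Nat.sInf_mem ⟨M, hMT⟩))
  refine ⟨hED, Subtype.val ''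
      (((cayleyGraph S).induce (cayleyBall S r)ᶜ).connectedComponentMk ⟨a, haK⟩).supp,
    ⟨_, rfl⟩, ?_, a, ⟨⟨a, haK⟩, rfl, rfl⟩, hED.trans hda.symm⟩
  obtain ⟨h', hfin'⟩ := haB
  exact hfin'.image _
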